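/- Let 1 < n < b be natural numbers and let (d_k, d_{k-1}, ..., d_0)_b be an (n,b,σ)-permutiple with carries c_j. Then (n − 1)·Σ_{j=0}^{k} d_j = (b − 1)·Σ_{j=1}^{k} c_j. -/
import Mathlib

lemma geom_aux (b : ℤ) : ∀ i : ℕ, (b - 1) * ∑ j ∈ Finset.Icc 1 i, b ^ (i - j) = b ^ i - 1 := by
  intro i
  induction i with
  | zero => simp
  | succ i ih =>
    rw [Finset.sum_Icc_succ_top (by omega : 1 ≤ i + 1)]
    have h : ∀ j ∈ Finset.Icc 1 i, b ^ (i + 1 - j) = b * b ^ (i - j) := by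
      intro j hj
      simp only [Finset.mem_Icc] at hj
      rw [show i + 1 - j = (i - j) + 1 by omega, pow_succ]
      ring
    rw [Finset.sum_congr rfl h, ← Finset.mul_sum]
    simp only [Nat.add_sub_cancel, Nat.sub_self, pow_zero, pow_succ]
    linear_combination b * ih

/-- The `j`-th carry `c_j = (n·Σ_{i=0}^{j-1} d_{σ(i)}·b^i − Σ_{i=0}^{j-1} d_i·b^i) / b^j`. -/
def carry (n b : ℕ) {k : ℕ} (d : Fin (k + 1) → ℕ) (σ : Equiv.Perm (Fin (k + 1)))
    (j : ℕ) : ℤ :=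
  ((n : ℤ) * ∑ i ∈ Finset.univ.filter (fun i : Fin (k + 1) => (i : ℕ) < j),
      (d (σ i) : ℤ) * (b : ℤ) ^ (i : ℕ)
    - ∑ i ∈ Finset.univ.filter (fun i : Fin (k + 1) => (i : ℕ) < j),
      (d i : ℤ) * (b : ℤ) ^ (i : ℕ)) / (b : ℤ) ^ j

theorem digit_sum_carry_sum
    (n b k : ℕ) (hn : 1 < n) (hnb : n < b)
    (d : Fin (k + 1) → ℕ) (hd : ∀ j, d j < b)
    (σ : Equiv.Perm (Fin (k + 1)))
    (hperm : ∑ j : Fin (k + 1), d j * b ^ (j : ℕ)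
      = n * ∑ j : Fin (k + 1), d (σ j) * b ^ (j : ℕ)) :
    ((n : ℤ) - 1) * ∑ j : Fin (k + 1), (d j : ℤ)
      = ((b : ℤ) - 1) * ∑ j ∈ Finset.Icc 1 k, carry n b d σ j := by
  have hb0 : (b : ℤ) ≠ 0 := by
    have : 0 < b := by omega
    exact_mod_cast this.ne'
  set e : Fin (k + 1) → ℤ := fun i => (d i : ℤ) - n * d (σ i) with he
  -- total identity
  have htot : ∑ i : Fin (k + 1), e i * (b : ℤ) ^ (i : ℕ) = 0 := by
    have h := congrArg (Nat.cast : ℕ → ℤ) hperm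
    push_cast at h
    simp only [he, sub_mul, Finset.sum_sub_distrib, mul_assoc]
    rw [← Finset.mul_sum, h]
    ring
  -- carry formula
  have hcarry : ∀ j : ℕ, carry n b d σ j
      = ∑ i ∈ Finset.univ.filter (fun i : Fin (k + 1) => j ≤ (i : ℕ)),
          e i * (b : ℤ) ^ ((i : ℕ) - j) := by
    intro j
    have hsplit : (∑ i ∈ Finset.univ.filter (fun i : Fin (k + 1) => (i : ℕ) < j),
          e i * (b : ℤ) ^ (i : ℕ))
        + ∑ i ∈ Finset.univ.filter (fun i : Fin (k + 1) => j ≤ (i : ℕ)),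
          e i * (b : ℤ) ^ (i : ℕ) = 0 := by
      rw [← htot]
      rw [← Finset.sum_filter_add_sum_filter_not Finset.univ
        (fun i : Fin (k + 1) => (i : ℕ) < j) (fun i => e i * (b : ℤ) ^ (i : ℕ))]
      congr 1
      apply Finset.sum_congr _ (fun _ _ => rfl)
      apply Finset.filter_congr
      intro i _
      simp [not_lt]
    have hnum : ((n : ℤ) * ∑ i ∈ Finset.univ.filter (fun i : Fin (k + 1) => (i : ℕ) < j),
          (d (σ i) : ℤ) * (b : ℤ) ^ (i : ℕ)
        - ∑ i ∈ Finset.univ.filter (fun i : Fin (k + 1) => (i : ℕ) < j),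
          (d i : ℤ) * (b : ℤ) ^ (i : ℕ))
        = (b : ℤ) ^ j * ∑ i ∈ Finset.univ.filter (fun i : Fin (k + 1) => j ≤ (i : ℕ)),
            e i * (b : ℤ) ^ ((i : ℕ) - j) := by
      have h1 : (∑ i ∈ Finset.univ.filter (fun i : Fin (k + 1) => (i : ℕ) < j),
          e i * (b : ℤ) ^ (i : ℕ))
          = ∑ i ∈ Finset.univ.filter (fun i : Fin (k + 1) => (i : ℕ) < j),
            (d i : ℤ) * (b : ℤ) ^ (i : ℕ)
          - (n : ℤ) * ∑ i ∈ Finset.univ.filter (fun i : Fin (k + 1) => (i : ℕ) < j),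
            (d (σ i) : ℤ) * (b : ℤ) ^ (i : ℕ) := by
        simp only [he, sub_mul, Finset.sum_sub_distrib, mul_assoc, Finset.mul_sum]
      have h2 : ∑ i ∈ Finset.univ.filter (fun i : Fin (k + 1) => j ≤ (i : ℕ)),
          e i * (b : ℤ) ^ (i : ℕ)
          = (b : ℤ) ^ j * ∑ i ∈ Finset.univ.filter (fun i : Fin (k + 1) => j ≤ (i : ℕ)),
            e i * (b : ℤ) ^ ((i : ℕ) - j) := by
        rw [Finset.mul_sum]
        apply Finset.sum_congr rfl
        intro i hi
        simp only [Finset.mem_filter] at hi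
        rw [show (i : ℕ) = j + ((i : ℕ) - j) by omega, pow_add,
          show j + ((i : ℕ) - j) - j = (i : ℕ) - j by omega]
        ring
      linarith [hsplit, h1, h2]
    rw [carry, hnum, Int.mul_ediv_cancel_left _ (pow_ne_zero j hb0)]
  -- main computation
  have key : ((b : ℤ) - 1) * ∑ j ∈ Finset.Icc 1 k, carry n b d σ j
      = ∑ i : Fin (k + 1), e i * ((b : ℤ) ^ (i : ℕ) - 1) := by
    calc ((b : ℤ) - 1) * ∑ j ∈ Finset.Icc 1 k, carry n b d σ j
        = ((b : ℤ) - 1) * ∑ j ∈ Finset.Icc 1 k, ∑ i : Fin (k + 1),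
            if j ≤ (i : ℕ) then e i * (b : ℤ) ^ ((i : ℕ) - j) else 0 := by
          congr 1
          apply Finset.sum_congr rfl
          intro j _
          rw [hcarry j, Finset.sum_filter]
      _ = ((b : ℤ) - 1) * ∑ i : Fin (k + 1), ∑ j ∈ Finset.Icc 1 k,
            if j ≤ (i : ℕ) then e i * (b : ℤ) ^ ((i : ℕ) - j) else 0 := by
          rw [Finset.sum_comm]
      _ = ∑ i : Fin (k + 1), e i * (((b : ℤ) - 1) * ∑ j ∈ Finset.Icc 1 (i : ℕ),
            (b : ℤ) ^ ((i : ℕ) - j)) := by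
          rw [Finset.mul_sum]
          apply Finset.sum_congr rfl
          intro i _
          rw [← Finset.sum_filter]
          have hset : (Finset.Icc 1 k).filter (fun j => j ≤ (i : ℕ))
              = Finset.Icc 1 (i : ℕ) := by
            ext j
            simp only [Finset.mem_filter, Finset.mem_Icc]
            have := i.isLt
            omega
          rw [hset, Finset.mul_sum, Finset.mul_sum, Finset.mul_sum]
          exact Finset.sum_congr rfl fun j _ => by ring
      _ = ∑ i : Fin (k + 1), e i * ((b : ℤ) ^ (i : ℕ) - 1) := by
          apply Finset.sum_congr rfl
          intro i _
          rw [geom_aux]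
  rw [key]
  have h1 : ∑ i : Fin (k + 1), e i * ((b : ℤ) ^ (i : ℕ) - 1)
      = ∑ i : Fin (k + 1), e i * (b : ℤ) ^ (i : ℕ) - ∑ i : Fin (k + 1), e i := by
    simp [mul_sub, Finset.sum_sub_distrib]
  have hsum : ∑ i : Fin (k + 1), (d (σ i) : ℤ) = ∑ i : Fin (k + 1), (d i : ℤ) :=
    Equiv.sum_comp σ (fun i => (d i : ℤ))
  have h2 : ∑ i : Fin (k + 1), e i
      = ∑ i : Fin (k + 1), (d i : ℤ) - n * ∑ i : Fin (k + 1), (d i : ℤ) := by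
    simp only [he, Finset.sum_sub_distrib, ← Finset.mul_sum, hsum]
  rw [h1, htot, h2]
  ring
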